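/- Let α_1, ..., α_μ be positive irrational numbers, β an integer, and δ ∈ (0, 1/2) with δμ < 1/2. Suppose D = β + ∑_{j=1}^μ α_j > 0. Then there exist infinitely many pairs (N, m) ∈ ℕ² such that m·β + ∑_{j=1}^μ ⌈m·α_j⌉ = N + Δ where Δ = #{j : 0 < {m·α_j} < δ}, and min({m·α_j}, 1 - {m·α_j}) < δ for all j. -/

import Mathlib

/-- Simultaneous Dirichlet approximation via pigeonhole. -/
private lemma dirichlet_sim (μ : ℕ) (α : Fin μ → ℝ) {ε : ℝ} (hε : 0 < ε) :
    ∃ m : ℕ, 1 ≤ m ∧ ∀ j, ∃ k : ℤ, |(m : ℝ) * α j - k| < ε := by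
  obtain ⟨Q, hQ⟩ := exists_nat_gt (1 / ε)
  have hQ0 : 0 < Q := by
    by_contra h
    push_neg at h
    interval_cases Q
    simp at hQ
    nlinarith [one_div_pos.2 hε]
  have hQR : (0:ℝ) < Q := by exact_mod_cast hQ0
  have hfl : ∀ (n : ℕ) (j : Fin μ), (⌊(Q:ℝ) * Int.fract ((n:ℝ) * α j)⌋).toNat < Q := by
    intro n j
    have h1 : ⌊(Q:ℝ) * Int.fract ((n:ℝ) * α j)⌋ < (Q:ℤ) := by
      rw [Int.floor_lt]
      push_cast
      nlinarith [Int.fract_lt_one ((n:ℝ) * α j), Int.fract_nonneg ((n:ℝ) * α j)]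
    omega
  set f : Fin (Q ^ μ + 1) → (Fin μ → Fin Q) :=
    fun n j => ⟨(⌊(Q:ℝ) * Int.fract ((n:ℕ) * α j)⌋).toNat, hfl n j⟩ with hf
  have hcard : Fintype.card (Fin μ → Fin Q) < Fintype.card (Fin (Q ^ μ + 1)) := by
    simp [Fintype.card_fun]
  obtain ⟨a, b, hab, hfab⟩ := Fintype.exists_ne_map_eq_of_card_lt f hcard
  wlog hlt : (a : ℕ) < (b : ℕ) generalizing a b
  · exact this b a (Ne.symm hab) hfab.symm (by omega)
  refine ⟨(b : ℕ) - (a : ℕ), by omega, fun j => ?_⟩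
  have hcast : (((b : ℕ) - (a : ℕ) : ℕ) : ℝ) = (b : ℕ) - (a : ℕ) := by
    push_cast [Nat.cast_sub hlt.le]
    ring
  refine ⟨⌊((b:ℕ):ℝ) * α j⌋ - ⌊((a:ℕ):ℝ) * α j⌋, ?_⟩
  have heq : (⌊(Q:ℝ) * Int.fract (((a:ℕ):ℝ) * α j)⌋).toNat
      = (⌊(Q:ℝ) * Int.fract (((b:ℕ):ℝ) * α j)⌋).toNat := by
    have := congrFun hfab j
    simpa [hf] using this
  have heq' : ⌊(Q:ℝ) * Int.fract (((a:ℕ):ℝ) * α j)⌋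
      = ⌊(Q:ℝ) * Int.fract (((b:ℕ):ℝ) * α j)⌋ := by
    have h1 : (0:ℤ) ≤ ⌊(Q:ℝ) * Int.fract (((a:ℕ):ℝ) * α j)⌋ :=
      Int.floor_nonneg.2 (mul_nonneg hQR.le (Int.fract_nonneg _))
    have h2 : (0:ℤ) ≤ ⌊(Q:ℝ) * Int.fract (((b:ℕ):ℝ) * α j)⌋ :=
      Int.floor_nonneg.2 (mul_nonneg hQR.le (Int.fract_nonneg _))
    omega
  set x := (Q:ℝ) * Int.fract (((a:ℕ):ℝ) * α j)
  set y := (Q:ℝ) * Int.fract (((b:ℕ):ℝ) * α j)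
  have h1 : (⌊y⌋:ℝ) ≤ x := by rw [← heq']; exact Int.floor_le x
  have h2 : x < (⌊y⌋:ℝ) + 1 := by rw [← heq']; exact Int.lt_floor_add_one x
  have h3 : (⌊y⌋:ℝ) ≤ y := Int.floor_le y
  have h4 : y < (⌊y⌋:ℝ) + 1 := Int.lt_floor_add_one y
  have hxy : |y - x| < 1 := by
    rw [abs_sub_lt_iff]; constructor <;> linarith
  have hdiff : (((b:ℕ) - (a:ℕ) : ℕ) : ℝ) * α j
      - (⌊((b:ℕ):ℝ) * α j⌋ - ⌊((a:ℕ):ℝ) * α j⌋ : ℤ)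
      = Int.fract (((b:ℕ):ℝ) * α j) - Int.fract (((a:ℕ):ℝ) * α j) := by
    rw [hcast]
    unfold Int.fract
    push_cast
    ring
  have hyx : y - x = (Q:ℝ) * (Int.fract (((b:ℕ):ℝ) * α j) - Int.fract (((a:ℕ):ℝ) * α j)) := by
    simp only [x, y]; ring
  have hlt1 : (Q:ℝ) * |Int.fract (((b:ℕ):ℝ) * α j) - Int.fract (((a:ℕ):ℝ) * α j)| < 1 := by
    rw [← abs_of_pos hQR, ← abs_mul, ← hyx]; exact hxy
  rw [hdiff]
  have hεQ : 1 < ε * (Q:ℝ) := by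
    rw [div_lt_iff₀ hε] at hQ; linarith
  nlinarith [abs_nonneg (Int.fract (((b:ℕ):ℝ) * α j) - Int.fract (((a:ℕ):ℝ) * α j))]

private lemma dirichlet_large (μ : ℕ) (α : Fin μ → ℝ) {ε : ℝ} (hε : 0 < ε) (M : ℕ) :
    ∃ m : ℕ, M < m ∧ ∀ j, ∃ k : ℤ, |(m : ℝ) * α j - k| < ε := by
  have hε' : 0 < ε / (M + 1) := by positivity
  obtain ⟨m₀, hm₀, h⟩ := dirichlet_sim μ α hε'
  refine ⟨(M + 1) * m₀, ?_, fun j => ?_⟩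
  · calc M < M + 1 := by omega
      _ = (M + 1) * 1 := (mul_one _).symm
      _ ≤ (M + 1) * m₀ := by exact Nat.mul_le_mul_left _ hm₀
  obtain ⟨k, hk⟩ := h j
  refine ⟨(M + 1) * k, ?_⟩
  have : ((((M:ℕ) + 1) * m₀ : ℕ) : ℝ) * α j - ((M + 1) * k : ℤ)
      = ((M:ℝ) + 1) * ((m₀ : ℝ) * α j - k) := by push_cast; ring
  rw [this, abs_mul, abs_of_pos (show (0:ℝ) < (M:ℝ)+1 by positivity)]
  calc ((M:ℝ) + 1) * |(m₀:ℝ) * α j - k| < ((M:ℝ) + 1) * (ε / (M+1)) :=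
        mul_lt_mul_of_pos_left hk (by positivity)
    _ = ε := by field_simp

open Classical in
theorem stmt_18 (μ : ℕ) (α : Fin μ → ℝ) (β : ℤ)
    (hαpos : ∀ j, 0 < α j) (hαirr : ∀ j, Irrational (α j))
    (δ : ℝ) (hδ : 0 < δ) (hδ2 : δ < 1 / 2) (hδμ : δ * μ < 1 / 2)
    (hD : 0 < (β : ℝ) + ∑ j, α j) :
    {p : ℕ × ℕ |
      ((p.2 : ℤ) * β + ∑ j, ⌈(p.2 : ℝ) * α j⌉ = (p.1 : ℤ) +
        (Finset.univ.filter (fun j : Fin μ =>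
          0 < Int.fract ((p.2 : ℝ) * α j) ∧ Int.fract ((p.2 : ℝ) * α j) < δ)).card) ∧
      ∀ j, min (Int.fract ((p.2 : ℝ) * α j)) (1 - Int.fract ((p.2 : ℝ) * α j)) < δ
    }.Infinite := by
  set D : ℝ := (β : ℝ) + ∑ j, α j with hDdef
  set S : Set (ℕ × ℕ) := {p : ℕ × ℕ |
      ((p.2 : ℤ) * β + ∑ j, ⌈(p.2 : ℝ) * α j⌉ = (p.1 : ℤ) +
        (Finset.univ.filter (fun j : Fin μ =>
          0 < Int.fract ((p.2 : ℝ) * α j) ∧ Int.fract ((p.2 : ℝ) * α j) < δ)).card) ∧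
      ∀ j, min (Int.fract ((p.2 : ℝ) * α j)) (1 - Int.fract ((p.2 : ℝ) * α j)) < δ} with hS
  suffices key : ∀ M : ℕ, ∃ p ∈ S, M < p.2 by
    by_contra hfin
    rw [Set.not_infinite] at hfin
    have himg : (Prod.snd '' S).Finite := hfin.image _
    obtain ⟨M, hM⟩ := himg.bddAbove
    obtain ⟨p, hp, hpM⟩ := key M
    exact absurd (hM ⟨p, hp, rfl⟩) (not_le.2 hpM)
  intro M
  set M' : ℕ := max M ⌈(μ:ℝ)/D⌉₊ with hM'
  obtain ⟨m, hmM', hm⟩ := dirichlet_large μ α hδ M'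
  have hm1 : 1 ≤ m := by omega
  have hmD : (μ:ℝ) < (m:ℝ) * D := by
    have h1 : (μ:ℝ)/D ≤ (⌈(μ:ℝ)/D⌉₊ : ℝ) := Nat.le_ceil _
    have h2 : (⌈(μ:ℝ)/D⌉₊ : ℝ) < (m:ℝ) := by
      have : ⌈(μ:ℝ)/D⌉₊ < m := lt_of_le_of_lt (le_max_right _ _) hmM'
      exact_mod_cast this
    have : (μ:ℝ)/D < (m:ℝ) := lt_of_le_of_lt h1 h2
    rwa [div_lt_iff₀ hD] at this
  -- fractional part facts
  have hfract : ∀ j, min (Int.fract ((m : ℝ) * α j)) (1 - Int.fract ((m : ℝ) * α j)) < δ := by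
    intro j
    obtain ⟨k, hk⟩ := hm j
    set t : ℝ := (m:ℝ) * α j - k with ht
    have hirr : Irrational ((m : ℝ) * α j) := by
      exact (hαirr j).natCast_mul (show m ≠ 0 by omega)
    have hbd := abs_lt.1 hk
    have ht0 : t ≠ 0 := by
      intro h0
      have hk0 : (m:ℝ) * α j = (k : ℝ) := by
        have : (m:ℝ) * α j - k = 0 := by rw [← ht]; exact h0
        linarith
      exact hirr ⟨(k:ℚ), by push_cast; rw [hk0]⟩
    have hmt : (m:ℝ) * α j = (k : ℝ) + t := by rw [ht]; ring
    rw [hmt, Int.fract_intCast_add]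
    rcases lt_or_gt_of_ne ht0 with hneg | hpos
    · have hfl : ⌊t⌋ = -1 := by
        rw [Int.floor_eq_iff]
        push_cast
        constructor <;> linarith [hbd.1, hδ2]
      have hfr : Int.fract t = t + 1 := by
        rw [Int.fract, hfl]; push_cast; ring
      rw [hfr]
      have : 1 - (t + 1) < δ := by linarith [hbd.1]
      exact lt_of_le_of_lt (min_le_right _ _) this
    · have hfr : Int.fract t = t := Int.fract_eq_self.2 ⟨le_of_lt hpos, by
        linarith [hbd.2, hδ2]⟩
      rw [hfr]
      exact lt_of_le_of_lt (min_le_left _ _) hbd.2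
  -- index sum
  set Δn : ℕ := (Finset.univ.filter (fun j : Fin μ =>
      0 < Int.fract ((m : ℝ) * α j) ∧ Int.fract ((m : ℝ) * α j) < δ)).card with hΔn
  set T : ℤ := (m : ℤ) * β + ∑ j, ⌈(m : ℝ) * α j⌉ with hT
  have hΔμ : Δn ≤ μ := by
    calc Δn ≤ Finset.univ.card := Finset.card_filter_le _ _
      _ = μ := by simp
  have hTD : (m:ℝ) * D ≤ (T:ℝ) := by
    rw [hT, hDdef]
    push_cast
    have : ∀ j ∈ Finset.univ, (m:ℝ) * α j ≤ (⌈(m:ℝ) * α j⌉ : ℝ) :=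
      fun j _ => Int.le_ceil _
    have hsum := Finset.sum_le_sum this
    rw [mul_add, Finset.mul_sum]
    linarith [hsum]
  have hΔT : (Δn : ℤ) ≤ T := by
    have h1 : (Δn : ℝ) ≤ (μ : ℝ) := by exact_mod_cast hΔμ
    have : (Δn : ℝ) ≤ (T : ℝ) := by linarith [hmD, hTD]
    exact_mod_cast this
  refine ⟨((T - Δn).toNat, m), ⟨?_, hfract⟩, by
    simpa using lt_of_le_of_lt (le_max_left M _) hmM'⟩
  have hNcast : ((T - (Δn:ℤ)).toNat : ℤ) = T - Δn := Int.toNat_of_nonneg (by omega)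
  show (m : ℤ) * β + ∑ j, ⌈(m : ℝ) * α j⌉ = ((T - (Δn:ℤ)).toNat : ℤ) + Δn
  rw [hNcast, ← hT]
  ring
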